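/- Let N be a prime, d ≤ N, and let n = (n₁,…,n_d) and l = (l₁,…,l_d) be d-tuples of pairwise distinct elements of ℤ/Nℤ, with associated DFT-FUNTFs (φ_{m,n})_{m ∈ ℤ/Nℤ} and (φ_{m,l})_{m ∈ ℤ/Nℤ}. Then there exists a unitary transformation U of ℂ^d such that {φ_{m,n} : m ∈ ℤ/Nℤ} = {U·φ_{m,l} : m ∈ ℤ/Nℤ} (equality of sets of vectors) if and only if there exist a permutation σ₁ of ℤ/Nℤ and a permutation σ₂ of {1,…,d} such that φ_{m,n}(k) = φ_{σ₁(m),l}(σ₂(k)) for all m ∈ ℤ/Nℤ and all k = 1,…,d. -/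

import Mathlib

open scoped BigOperators

/-- The `m`-th vector of the DFT-FUNTF associated to the generators `n = (n₁,…,n_d)`:
its `k`-th coordinate is `(1/√d)·ω^(m·n_k)` where `ω = exp(2πi/N)`. -/
noncomputable def dftVec (N d : ℕ) (n : Fin d → ZMod N) (m : ZMod N) :
    EuclideanSpace ℂ (Fin d) :=
  WithLp.toLp 2 fun k => ((1 / Real.sqrt d : ℝ) : ℂ) *
    Complex.exp (2 * Real.pi * Complex.I / N) ^ (m * n k).val

open Finset Polynomial in
private lemma dft_coeffs_zero {N : ℕ} [NeZero N] (hN : N.Prime) (c : ZMod N → ℤ)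
    (h0 : ∑ j : ZMod N, (c j : ℂ) * Complex.exp (2 * Real.pi * Complex.I / N) ^ j.val = 0)
    (h1 : ∑ j : ZMod N, c j = 0) : ∀ j, c j = 0 := by
  haveI : Fact N.Prime := ⟨hN⟩
  set ω : ℂ := Complex.exp (2 * Real.pi * Complex.I / N) with hω
  have hprim : IsPrimitiveRoot ω N := Complex.isPrimitiveRoot_exp N hN.ne_zero
  set P : ℚ[X] := ∑ i ∈ Finset.range N, C ((c (i : ZMod N) : ℚ)) * X ^ i with hP
  have hcoeff : ∀ m : ℕ, P.coeff m = if m ∈ Finset.range N then (c (m : ZMod N) : ℚ) else 0 := by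
    intro m
    rw [hP, finset_sum_coeff]
    rw [Finset.sum_congr rfl (fun i _ => by
      rw [coeff_C_mul, coeff_X_pow, mul_ite, mul_one, mul_zero])]
    exact Finset.sum_ite_eq _ _ _
  have hroot : aeval ω P = 0 := by
    have h2 : aeval ω P = ∑ i ∈ Finset.range N, (c (i : ZMod N) : ℂ) * ω ^ i := by
      rw [hP, map_sum]
      refine Finset.sum_congr rfl fun i _ => ?_
      rw [map_mul, map_pow, aeval_C, aeval_X, eq_ratCast]
      push_cast
      ring
    rw [h2, ← h0]
    refine (Finset.sum_nbij' (fun j => (ZMod.val j : ℕ)) (fun i => (i : ZMod N)) ?_ ?_ ?_ ?_ ?_).symm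
    · intro j _; exact Finset.mem_range.2 (ZMod.val_lt j)
    · intro i _; exact Finset.mem_univ _
    · intro j _; exact ZMod.natCast_rightInverse j
    · intro i hi; exact ZMod.val_cast_of_lt (Finset.mem_range.1 hi)
    · intro j _
      rw [ZMod.natCast_rightInverse j]
  have hdvd : cyclotomic N ℚ ∣ P := by
    rw [cyclotomic_eq_minpoly_rat hprim hN.pos]
    exact minpoly.dvd ℚ ω hroot
  obtain ⟨q, hq⟩ := hdvd
  have hPdeg : P.natDegree ≤ N - 1 := by
    refine natDegree_sum_le_of_forall_le _ _ fun i hi => ?_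
    refine le_trans (natDegree_C_mul_le _ _) ?_
    rw [natDegree_X_pow]
    have := Finset.mem_range.1 hi
    omega
  have hΦdeg : (cyclotomic N ℚ).natDegree = N - 1 := by
    rw [natDegree_cyclotomic, Nat.totient_prime hN]
  have hqdeg : q.degree ≤ 0 := by
    by_contra hcon
    push_neg at hcon
    have hq0 : q ≠ 0 := fun h => by simp [h] at hcon
    have h1q : 1 ≤ q.natDegree := natDegree_pos_iff_degree_pos.2 hcon
    have h3 := natDegree_mul (cyclotomic_ne_zero N ℚ) hq0
    rw [← hq, hΦdeg] at h3
    have hN1 : 2 ≤ N := hN.two_le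
    omega
  obtain ⟨r, hr⟩ : ∃ r : ℚ, q = C r := ⟨q.coeff 0, eq_C_of_degree_le_zero hqdeg⟩
  have hcr : ∀ i ∈ Finset.range N, (c (i : ZMod N) : ℚ) = r := by
    intro i hi
    have h2 := hcoeff i
    rw [if_pos hi, hq, hr, coeff_mul_C, cyclotomic_prime ℚ N, finset_sum_coeff] at h2
    rw [Finset.sum_congr rfl (fun m _ => coeff_X_pow m i),
      Finset.sum_ite_eq _ i (fun _ => (1 : ℚ)), if_pos hi, one_mul] at h2
    exact h2.symm
  have hcr' : ∀ j : ZMod N, (c j : ℚ) = r := by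
    intro j
    have h2 := hcr j.val (Finset.mem_range.2 (ZMod.val_lt j))
    rwa [ZMod.natCast_rightInverse j] at h2
  have hsum : (N : ℚ) * r = 0 := by
    have h2 : ∑ j : ZMod N, (c j : ℚ) = 0 := by exact_mod_cast congrArg (Int.cast : ℤ → ℚ) h1
    rw [Finset.sum_congr rfl (fun j _ => hcr' j), Finset.sum_const, Finset.card_univ,
      ZMod.card, nsmul_eq_mul] at h2
    exact h2
  have hr0 : r = 0 := by
    have hN0 : (N : ℚ) ≠ 0 := Nat.cast_ne_zero.2 hN.ne_zero
    exact (mul_eq_zero.1 hsum).resolve_left hN0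
  intro j
  have := hcr' j
  rw [hr0] at this
  exact_mod_cast this

open Finset in
private lemma dft_exists_perm {N d : ℕ} [NeZero N] (hN : N.Prime) (A B : Fin d → ZMod N)
    (h : ∑ k, Complex.exp (2 * Real.pi * Complex.I / N) ^ (A k).val
       = ∑ k, Complex.exp (2 * Real.pi * Complex.I / N) ^ (B k).val) :
    ∃ σ : Equiv.Perm (Fin d), ∀ k, B (σ k) = A k := by
  classical
  have key : ∀ (F : Fin d → ZMod N),
      ∑ j : ZMod N, (((Finset.univ.filter fun k => F k = j).card : ℂ))
        * Complex.exp (2 * Real.pi * Complex.I / N) ^ j.val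
      = ∑ k, Complex.exp (2 * Real.pi * Complex.I / N) ^ (F k).val := by
    intro F
    calc ∑ j : ZMod N, (((Finset.univ.filter fun k => F k = j).card : ℂ))
        * Complex.exp (2 * Real.pi * Complex.I / N) ^ j.val
        = ∑ j : ZMod N, ∑ _k ∈ Finset.univ.filter fun k => F k = j,
            Complex.exp (2 * Real.pi * Complex.I / N) ^ j.val := by
          refine Finset.sum_congr rfl fun j _ => ?_
          rw [Finset.sum_const, nsmul_eq_mul]
      _ = _ := Finset.sum_fiberwise' Finset.univ F
            (fun j => Complex.exp (2 * Real.pi * Complex.I / N) ^ j.val)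
  have hcount : ∀ j : ZMod N, (Finset.univ.filter fun k => A k = j).card
      = (Finset.univ.filter fun k => B k = j).card := by
    have h0 := dft_coeffs_zero hN
      (fun j => ((Finset.univ.filter fun k => A k = j).card : ℤ)
        - (Finset.univ.filter fun k => B k = j).card) ?_ ?_
    · intro j; have := h0 j; omega
    · push_cast
      simp only [sub_mul, Finset.sum_sub_distrib]
      rw [key A, key B, h, sub_self]
    · have hA := (Finset.card_eq_sum_card_fiberwise (f := A) (t := Finset.univ)
        (s := Finset.univ) (fun x _ => Finset.mem_univ _)).symm
      have hB := (Finset.card_eq_sum_card_fiberwise (f := B) (t := Finset.univ)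
        (s := Finset.univ) (fun x _ => Finset.mem_univ _)).symm
      rw [Finset.sum_sub_distrib, sub_eq_zero]
      exact_mod_cast hA.trans hB.symm
  have e : ∀ j : ZMod N, {k // A k = j} ≃ {k // B k = j} := fun j =>
    Fintype.equivOfCardEq (by rw [Fintype.card_subtype, Fintype.card_subtype]; exact hcount j)
  exact ⟨Equiv.ofFiberEquiv e, fun k => Equiv.ofFiberEquiv_map e k⟩

/-- Abbreviation for `exp(2πi/N)^(a.val)`. -/
private noncomputable def zetaC (N : ℕ) (a : ZMod N) : ℂ :=
  Complex.exp (2 * Real.pi * Complex.I / N) ^ a.val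

private lemma zetaC_add {N : ℕ} [NeZero N] (a b : ZMod N) :
    zetaC N (a + b) = zetaC N a * zetaC N b := by
  have hω : Complex.exp (2 * Real.pi * Complex.I / N) ^ N = 1 :=
    (Complex.isPrimitiveRoot_exp N (NeZero.ne N)).pow_eq_one
  rw [zetaC, zetaC, zetaC, ZMod.val_add, ← pow_eq_pow_mod _ hω, pow_add]

private lemma zetaC_zero {N : ℕ} [NeZero N] : zetaC N 0 = 1 := by
  rw [zetaC, ZMod.val_zero, pow_zero]

private lemma zetaC_conj {N : ℕ} [NeZero N] (a : ZMod N) :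
    (starRingEnd ℂ) (zetaC N a) = zetaC N (-a) := by
  have h1 : zetaC N a * zetaC N (-a) = 1 := by
    rw [← zetaC_add, add_neg_cancel, zetaC_zero]
  have habs : ‖zetaC N a‖ = 1 := by
    rw [zetaC, norm_pow,
      Complex.norm_eq_one_of_pow_eq_one
        (Complex.isPrimitiveRoot_exp N (NeZero.ne N)).pow_eq_one (NeZero.ne N), one_pow]
  rw [← Complex.inv_eq_conj habs]
  exact inv_eq_of_mul_eq_one_right h1

private lemma dft_inner {N d : ℕ} [NeZero N] (n : Fin d → ZMod N) (m m' : ZMod N) :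
    (inner ℂ (dftVec N d n m) (dftVec N d n m') : ℂ)
      = (((1 / Real.sqrt d : ℝ) : ℂ)) ^ 2 * ∑ k, zetaC N ((m' - m) * n k) := by
  rw [PiLp.inner_apply, Finset.mul_sum]
  refine Finset.sum_congr rfl fun k _ => ?_
  have h2 : (inner ℂ (dftVec N d n m k) (dftVec N d n m' k) : ℂ)
      = (starRingEnd ℂ) (((1 / Real.sqrt d : ℝ) : ℂ) * zetaC N (m * n k))
        * (((1 / Real.sqrt d : ℝ) : ℂ) * zetaC N (m' * n k)) := RCLike.inner_apply' _ _
  rw [h2, map_mul, Complex.conj_ofReal, zetaC_conj]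
  have h3 : zetaC N (-(m * n k)) * zetaC N (m' * n k) = zetaC N ((m' - m) * n k) := by
    rw [← zetaC_add]; congr 1; ring
  calc (((1 / Real.sqrt d : ℝ) : ℂ) * zetaC N (-(m * n k)))
        * (((1 / Real.sqrt d : ℝ) : ℂ) * zetaC N (m' * n k))
      = (((1 / Real.sqrt d : ℝ) : ℂ)) ^ 2 * (zetaC N (-(m * n k)) * zetaC N (m' * n k)) := by
        ring
    _ = _ := by rw [h3]
/-- For `N` prime, two DFT-FUNTFs are related by a unitary transformation of `ℂ^d`
(as sets of vectors) iff the vectors of one are obtained from the vectors of the other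
by a relabelling `σ₁` of the frame indices together with a permutation `σ₂` of the
coordinates. -/
theorem dft_funtf_unitary_equiv_iff_perm (N d : ℕ) [NeZero N] (hN : N.Prime)
    (hdN : d ≤ N) (n l : Fin d → ZMod N)
    (hn : Function.Injective n) (hl : Function.Injective l) :
    (∃ U : EuclideanSpace ℂ (Fin d) ≃ₗᵢ[ℂ] EuclideanSpace ℂ (Fin d),
        Set.range (dftVec N d n) = Set.range (fun m => U (dftVec N d l m))) ↔
      ∃ (σ₁ : Equiv.Perm (ZMod N)) (σ₂ : Equiv.Perm (Fin d)),
        ∀ (m : ZMod N) (k : Fin d),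
          dftVec N d n m k = dftVec N d l (σ₁ m) (σ₂ k) := by
  haveI : Fact N.Prime := ⟨hN⟩
  have hprim : IsPrimitiveRoot (Complex.exp (2 * Real.pi * Complex.I / N)) N :=
    Complex.isPrimitiveRoot_exp N hN.ne_zero
  constructor
  · rintro ⟨U, hU⟩
    by_cases hex : ∃ k0, n k0 ≠ 0
    · -- main case
      obtain ⟨k0, hk0⟩ := hex
      have hd : 0 < d := k0.pos
      have hs : (((1 / Real.sqrt d : ℝ)) : ℂ) ≠ 0 := by
        have : Real.sqrt d ≠ 0 := by
          positivity
        simp [this]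
      obtain ⟨p0, hp0⟩ : dftVec N d n 0 ∈ Set.range (fun m => U (dftVec N d l m)) :=
        hU ▸ Set.mem_range_self 0
      obtain ⟨p1, hp1⟩ : dftVec N d n 1 ∈ Set.range (fun m => U (dftVec N d l m)) :=
        hU ▸ Set.mem_range_self 1
      have hp0' : U (dftVec N d l p0) = dftVec N d n 0 := hp0
      have hp1' : U (dftVec N d l p1) = dftVec N d n 1 := hp1
      have hne : dftVec N d n 0 ≠ dftVec N d n 1 := by
        intro hcon
        have h4 := congrFun (congrArg WithLp.ofLp hcon) k0
        simp only [dftVec, WithLp.ofLp_toLp, zero_mul, one_mul, ZMod.val_zero, pow_zero, mul_one] at h4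
        exact hprim.pow_ne_one_of_pos_of_lt (ZMod.val_pos.2 hk0).ne' (ZMod.val_lt _)
          (mul_left_cancel₀ hs ((mul_one _).trans h4)).symm
      have hp01 : p1 - p0 ≠ 0 := by
        rw [sub_ne_zero]
        rintro rfl
        exact hne (hp0'.symm.trans hp1')
      have hinner := U.inner_map_map (dftVec N d l p0) (dftVec N d l p1)
      rw [hp0', hp1', dft_inner, dft_inner] at hinner
      have hsums := mul_left_cancel₀ (pow_ne_zero 2 hs) hinner
      rw [sub_zero] at hsums
      simp only [one_mul] at hsums
      simp only [zetaC] at hsums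
      obtain ⟨σ₂, hσ₂⟩ := dft_exists_perm hN n (fun k => (p1 - p0) * l k) hsums
      refine ⟨Equiv.mulLeft₀ (p1 - p0) hp01, σ₂, fun m k => ?_⟩
      have hmul : m * n k = ((Equiv.mulLeft₀ (p1 - p0) hp01) m) * l (σ₂ k) := by
        have h5 := hσ₂ k
        simp only [Equiv.mulLeft₀_apply]
        rw [← h5]
        ring
      simp only [dftVec, hmul]
    · -- degenerate case : all n k = 0
      push_neg at hex
      have hl0 : ∀ k, l k = 0 := by
        intro k
        by_contra hlk
        have hd : 0 < d := k.pos
        have hs : (((1 / Real.sqrt d : ℝ)) : ℂ) ≠ 0 := by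
          have : Real.sqrt d ≠ 0 := by positivity
          simp [this]
        have hconst : ∀ m : ZMod N, dftVec N d n m = dftVec N d n 0 := by
          intro m
          refine (WithLp.ext_iff _).2 (funext fun k' => ?_)
          simp [dftVec, hex k']
        obtain ⟨m0, hm0⟩ : U (dftVec N d l 0) ∈ Set.range (dftVec N d n) :=
          hU.symm ▸ Set.mem_range_self 0
        obtain ⟨m1, hm1⟩ : U (dftVec N d l 1) ∈ Set.range (dftVec N d n) :=
          hU.symm ▸ Set.mem_range_self 1
        have h6 : U (dftVec N d l 0) = U (dftVec N d l 1) := by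
          rw [← hm0, ← hm1, hconst m0, hconst m1]
        have h7 := congrFun (congrArg WithLp.ofLp (U.injective h6)) k
        simp only [dftVec, WithLp.ofLp_toLp, zero_mul, one_mul, ZMod.val_zero, pow_zero, mul_one] at h7
        exact hprim.pow_ne_one_of_pos_of_lt (ZMod.val_pos.2 hlk).ne' (ZMod.val_lt _)
          (mul_left_cancel₀ hs ((mul_one _).trans h7)).symm
      exact ⟨1, 1, fun m k => by simp [dftVec, hex k, hl0 k]⟩
  · rintro ⟨σ₁, σ₂, hσ⟩
    refine ⟨LinearIsometryEquiv.piLpCongrLeft 2 ℂ ℂ σ₂.symm, ?_⟩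
    have hUapp : ∀ (x : EuclideanSpace ℂ (Fin d)) (k : Fin d),
        (LinearIsometryEquiv.piLpCongrLeft 2 ℂ ℂ σ₂.symm) x k = x (σ₂ k) := by
      intro x k
      rw [LinearIsometryEquiv.piLpCongrLeft_apply]
      simp [Equiv.piCongrLeft'_apply]
    have hvec : ∀ m, dftVec N d n m
        = (LinearIsometryEquiv.piLpCongrLeft 2 ℂ ℂ σ₂.symm) (dftVec N d l (σ₁ m)) := by
      intro m
      refine (WithLp.ext_iff _).2 (funext fun k => ?_)
      rw [hUapp]
      exact hσ m k
    calc Set.range (dftVec N d n)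
        = Set.range (fun m => (LinearIsometryEquiv.piLpCongrLeft 2 ℂ ℂ σ₂.symm)
            (dftVec N d l (σ₁ m))) := by
          exact congrArg Set.range (funext hvec)
      _ = Set.range ((fun m => (LinearIsometryEquiv.piLpCongrLeft 2 ℂ ℂ σ₂.symm)
            (dftVec N d l m)) ∘ σ₁) := rfl
      _ = Set.range (fun m => (LinearIsometryEquiv.piLpCongrLeft 2 ℂ ℂ σ₂.symm)
            (dftVec N d l m)) :=
          σ₁.surjective.range_comp _
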